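/- Suppose f : R^n → R is C^1 with L-Lipschitz gradient. Let S ∈ R^{n×p} with columns s^i and T_i ∈ R^{n×q_i} for i = 1,…,p, all nonzero. Define the generalized simplex Hessian ∇²_s f(x^0;S;T_{1:p}) := (Sᵀ)†δ²_f, where the i-th row of δ²_f is (∇_s f(x^0+s^i;T_i) − ∇_s f(x^0;T_i))ᵀ and ∇_s f(y;T) := (Tᵀ)†δ_f(y;T) with (δ_f(y;T))_j = f(y+t^j) − f(y). Then ||∇²_s f(x^0;S;T_{1:p})|| ≤ L ||(S/Δ_S)†|| · sqrt(Σ_{i=1}^p q_i ||(T_i/Δ_{T_i})†||²), where ||·|| is the spectral norm, † the Moore–Penrose pseudoinverse, and Δ_A = max over columns a of A of ||a||. -/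

import Mathlib

open Matrix
open scoped RealInnerProductSpace

noncomputable section

abbrev Eu (n : ℕ) := EuclideanSpace ℝ (Fin n)

def IsMP {a b : ℕ} (A : Matrix (Fin a) (Fin b) ℝ) (A' : Matrix (Fin b) (Fin a) ℝ) : Prop :=
  A * A' * A = A ∧ A' * A * A' = A' ∧ (A * A')ᵀ = A * A' ∧ (A' * A)ᵀ = A' * A

def euclNorm {k : ℕ} (v : Fin k → ℝ) : ℝ := Real.sqrt (∑ i, v i ^ 2)

def spNorm {a b : ℕ} (A : Matrix (Fin a) (Fin b) ℝ) : ℝ :=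
  ⨆ v : {v : Fin b → ℝ // euclNorm v ≤ 1}, euclNorm (A.mulVec v.1)

def frobNorm {a b : ℕ} (A : Matrix (Fin a) (Fin b) ℝ) : ℝ :=
  Real.sqrt (∑ i, ∑ j, A i j ^ 2)

def mat1Norm {a b : ℕ} (A : Matrix (Fin a) (Fin b) ℝ) : ℝ := ⨆ j, ∑ i, |A i j|

def clm {a b : ℕ} (A : Matrix (Fin a) (Fin b) ℝ) : Eu b →L[ℝ] Eu a :=
  LinearMap.toContinuousLinearMap (Matrix.toEuclideanLin A)

lemma euclNorm_eq {k : ℕ} (v : Fin k → ℝ) :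
    euclNorm v = ‖(WithLp.equiv 2 (Fin k → ℝ)).symm v‖ := by
  rw [EuclideanSpace.norm_eq]
  simp [euclNorm, Real.norm_eq_abs, sq_abs]

lemma clm_apply {a b : ℕ} (A : Matrix (Fin a) (Fin b) ℝ) (x : Eu b) :
    clm A x = (WithLp.equiv 2 (Fin a → ℝ)).symm (A.mulVec (WithLp.equiv 2 (Fin b → ℝ) x)) := by
  simp [clm, Matrix.toEuclideanLin_apply]

lemma spNorm_eq {a b : ℕ} (A : Matrix (Fin a) (Fin b) ℝ) : spNorm A = ‖clm A‖ := by
  rw [← ContinuousLinearMap.sSup_unitClosedBall_eq_norm (clm A), spNorm, iSup]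
  congr 1
  ext y
  constructor
  · rintro ⟨⟨v, hv⟩, rfl⟩
    refine ⟨(WithLp.equiv 2 (Fin b → ℝ)).symm v, ?_, ?_⟩
    · rw [Metric.mem_closedBall, dist_zero_right, ← euclNorm_eq]; exact hv
    · show ‖clm A _‖ = _
      rw [clm_apply]; simp [← euclNorm_eq]
      exact (euclNorm_eq _).symm
  · rintro ⟨x, hx, rfl⟩
    refine ⟨⟨WithLp.equiv 2 (Fin b → ℝ) x, ?_⟩, ?_⟩
    · rw [euclNorm_eq]; simpa using (Metric.mem_closedBall.mp hx).trans_eq (by simp [dist_zero_right])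
    · show _ = ‖clm A _‖
      rw [clm_apply]
      exact euclNorm_eq _

lemma spNorm_nonneg {a b : ℕ} (A : Matrix (Fin a) (Fin b) ℝ) : 0 ≤ spNorm A := by
  rw [spNorm_eq]; exact norm_nonneg _

lemma euclNorm_nonneg {k : ℕ} (v : Fin k → ℝ) : 0 ≤ euclNorm v := Real.sqrt_nonneg _

lemma euclNorm_mulVec_le {a b : ℕ} (A : Matrix (Fin a) (Fin b) ℝ) (v : Fin b → ℝ) :
    euclNorm (A.mulVec v) ≤ spNorm A * euclNorm v := by
  have h := (clm A).le_opNorm ((WithLp.equiv 2 (Fin b → ℝ)).symm v)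
  rw [clm_apply] at h
  simp only [Equiv.apply_symm_apply] at h
  rw [← euclNorm_eq, ← euclNorm_eq, ← spNorm_eq] at h
  exact h

lemma clm_mul {a b c : ℕ} (A : Matrix (Fin a) (Fin b) ℝ) (B : Matrix (Fin b) (Fin c) ℝ) :
    clm (A * B) = (clm A).comp (clm B) := by
  apply ContinuousLinearMap.ext
  intro x
  simp [clm_apply, Matrix.mulVec_mulVec]

lemma spNorm_mul_le {a b c : ℕ} (A : Matrix (Fin a) (Fin b) ℝ) (B : Matrix (Fin b) (Fin c) ℝ) :
    spNorm (A * B) ≤ spNorm A * spNorm B := by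
  rw [spNorm_eq, spNorm_eq, spNorm_eq, clm_mul]
  exact ContinuousLinearMap.opNorm_comp_le _ _

lemma spNorm_transpose {a b : ℕ} (A : Matrix (Fin a) (Fin b) ℝ) : spNorm Aᵀ = spNorm A := by
  rw [spNorm_eq, spNorm_eq]
  have h1 : (Aᵀ : Matrix (Fin b) (Fin a) ℝ) = Aᴴ := by
    ext i j; simp [Matrix.conjTranspose_apply]
  have h2 : Matrix.toEuclideanLin Aᴴ = LinearMap.adjoint (Matrix.toEuclideanLin A) :=
    Matrix.toEuclideanLin_conjTranspose_eq_adjoint A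
  have h3 : clm Aᵀ = ContinuousLinearMap.adjoint (clm A) := by
    rw [clm, h1, h2, clm]
    exact LinearMap.adjoint_toContinuousLinearMap _
  rw [h3]
  exact ContinuousLinearMap.adjoint.norm_map (clm A)

lemma spNorm_smul {a b : ℕ} (c : ℝ) (A : Matrix (Fin a) (Fin b) ℝ) :
    spNorm (c • A) = |c| * spNorm A := by
  rw [spNorm_eq, spNorm_eq]
  have : clm (c • A) = c • clm A := by
    apply ContinuousLinearMap.ext
    intro x
    simp [clm, _root_.map_smul]
  rw [this]
  rw [show ‖c • clm A‖ = ‖c‖ * ‖clm A‖ from norm_smul c (clm A), Real.norm_eq_abs]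

lemma spNorm_le_frobNorm {a b : ℕ} (A : Matrix (Fin a) (Fin b) ℝ) :
    spNorm A ≤ frobNorm A := by
  have hne : Nonempty {v : Fin b → ℝ // euclNorm v ≤ 1} :=
    ⟨⟨0, by simp [euclNorm]⟩⟩
  refine ciSup_le fun ⟨v, hv⟩ => ?_
  have key : euclNorm (A.mulVec v) ≤ frobNorm A * euclNorm v := by
    rw [euclNorm, frobNorm, euclNorm, ← Real.sqrt_mul (by positivity)]
    apply Real.sqrt_le_sqrt
    rw [Finset.sum_mul]
    apply Finset.sum_le_sum
    intro i _
    simpa [Matrix.mulVec, dotProduct] using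
      Finset.sum_mul_sq_le_sq_mul_sq Finset.univ (fun j => A i j) v
  calc euclNorm (A.mulVec v) ≤ frobNorm A * euclNorm v := key
    _ ≤ frobNorm A * 1 := by
        apply mul_le_mul_of_nonneg_left hv (Real.sqrt_nonneg _)
    _ = frobNorm A := mul_one _

lemma IsMP.unique {a b : ℕ} {A : Matrix (Fin a) (Fin b) ℝ}
    {X Y : Matrix (Fin b) (Fin a) ℝ} (hX : IsMP A X) (hY : IsMP A Y) : X = Y := by
  obtain ⟨hX1, hX2, hX3, hX4⟩ := hX
  obtain ⟨hY1, hY2, hY3, hY4⟩ := hY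
  have hAX : A * X = A * Y := by
    calc A * X = (A * X)ᵀ := hX3.symm
      _ = Xᵀ * Aᵀ := Matrix.transpose_mul _ _
      _ = Xᵀ * (A * Y * A)ᵀ := by rw [hY1]
      _ = Xᵀ * (Aᵀ * (A * Y)ᵀ) := by rw [Matrix.transpose_mul (A * Y) A]
      _ = (Xᵀ * Aᵀ) * (A * Y)ᵀ := by rw [Matrix.mul_assoc]
      _ = (A * X)ᵀ * (A * Y)ᵀ := by rw [Matrix.transpose_mul A X]
      _ = (A * X) * (A * Y) := by rw [hX3, hY3]
      _ = (A * X * A) * Y := by rw [Matrix.mul_assoc, Matrix.mul_assoc, Matrix.mul_assoc]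
      _ = A * Y := by rw [hX1]
  have hXA : X * A = Y * A := by
    calc X * A = (X * A)ᵀ := hX4.symm
      _ = Aᵀ * Xᵀ := Matrix.transpose_mul _ _
      _ = (A * Y * A)ᵀ * Xᵀ := by rw [hY1]
      _ = (A * (Y * A))ᵀ * Xᵀ := by rw [Matrix.mul_assoc]
      _ = ((Y * A)ᵀ * Aᵀ) * Xᵀ := by rw [Matrix.transpose_mul]
      _ = (Y * A) * (Aᵀ * Xᵀ) := by rw [hY4, Matrix.mul_assoc]
      _ = (Y * A) * (X * A)ᵀ := by rw [← Matrix.transpose_mul]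
      _ = (Y * A) * (X * A) := by rw [hX4]
      _ = Y * (A * X * A) := by rw [Matrix.mul_assoc, ← Matrix.mul_assoc A X A]
      _ = Y * A := by rw [hX1]
  calc X = X * A * X := hX2.symm
    _ = X * A * Y := by rw [Matrix.mul_assoc, hAX, ← Matrix.mul_assoc]
    _ = Y * A * Y := by rw [hXA]
    _ = Y := hY2

lemma IsMP.transpose {a b : ℕ} {A : Matrix (Fin a) (Fin b) ℝ}
    {X : Matrix (Fin b) (Fin a) ℝ} (h : IsMP A X) : IsMP Aᵀ Xᵀ := by
  obtain ⟨h1, h2, h3, h4⟩ := h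
  refine ⟨?_, ?_, ?_, ?_⟩
  · calc Aᵀ * Xᵀ * Aᵀ = (A * (X * A))ᵀ := by
          rw [Matrix.transpose_mul, Matrix.transpose_mul]
      _ = Aᵀ := by rw [← Matrix.mul_assoc, h1]
  · calc Xᵀ * Aᵀ * Xᵀ = (X * (A * X))ᵀ := by
          rw [Matrix.transpose_mul, Matrix.transpose_mul]
      _ = Xᵀ := by rw [← Matrix.mul_assoc, h2]
  · simp [← Matrix.transpose_mul, h4]
  · simp [← Matrix.transpose_mul, h3]

lemma IsMP.smul {a b : ℕ} {A : Matrix (Fin a) (Fin b) ℝ}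
    {X : Matrix (Fin b) (Fin a) ℝ} (h : IsMP A X) {c : ℝ} (hc : c ≠ 0) :
    IsMP (c • A) (c⁻¹ • X) := by
  obtain ⟨h1, h2, h3, h4⟩ := h
  have hcc : c • c⁻¹ • (1:ℝ) = 1 := by simp [hc]
  have e1 : (c • A) * (c⁻¹ • X) = A * X := by
    rw [Matrix.smul_mul, Matrix.mul_smul, smul_smul]
    field_simp
    rw [one_smul]
  have e2 : (c⁻¹ • X) * (c • A) = X * A := by
    rw [Matrix.smul_mul, Matrix.mul_smul, smul_smul]
    field_simp
    rw [one_smul]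
  refine ⟨?_, ?_, ?_, ?_⟩
  · rw [e1, Matrix.mul_smul, h1]
  · rw [Matrix.mul_assoc, e1, Matrix.smul_mul, ← Matrix.mul_assoc, h2]
  · rw [e1]; exact h3
  · rw [e2]; exact h4

lemma secondDiff_bound {n : ℕ} (f : Eu n → ℝ) (g : Eu n → Eu n) (L : ℝ)
    (hgrad : ∀ x, HasGradientAt f (g x) x)
    (hlip : ∀ x y, ‖g x - g y‖ ≤ L * ‖x - y‖)
    (a s t : Eu n) :
    |f (a + s + t) - f (a + s) - (f (a + t) - f a)| ≤ L * ‖s‖ * ‖t‖ := by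
  set φ : ℝ → ℝ := fun τ => f (a + t + τ • s) - f (a + τ • s) with hφ
  have hderiv : ∀ τ : ℝ, HasDerivAt φ
      (⟪g (a + t + τ • s), s⟫ - ⟪g (a + τ • s), s⟫) τ := by
    intro τ
    have hc1 : HasDerivAt (fun τ : ℝ => a + t + τ • s) s τ := by
      simpa using ((hasDerivAt_id τ).smul_const s).const_add (a + t)
    have hc2 : HasDerivAt (fun τ : ℝ => a + τ • s) s τ := by
      simpa using ((hasDerivAt_id τ).smul_const s).const_add a
    have h1 : HasDerivAt (fun τ : ℝ => f (a + t + τ • s)) ⟪g (a + t + τ • s), s⟫ τ := by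
      have := ((hgrad (a + t + τ • s)).hasFDerivAt.comp_hasDerivAt τ hc1)
      simp [InnerProductSpace.toDual_apply_apply] at this; exact this
    have h2 : HasDerivAt (fun τ : ℝ => f (a + τ • s)) ⟪g (a + τ • s), s⟫ τ := by
      have := ((hgrad (a + τ • s)).hasFDerivAt.comp_hasDerivAt τ hc2)
      simp [InnerProductSpace.toDual_apply_apply] at this; exact this
    exact h1.sub h2
  have hbound : ∀ τ : ℝ, τ ∈ Set.univ →
      ‖⟪g (a + t + τ • s), s⟫ - ⟪g (a + τ • s), s⟫‖ ≤ L * ‖t‖ * ‖s‖ := by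
    intro τ _
    rw [← inner_sub_left]
    calc ‖⟪g (a + t + τ • s) - g (a + τ • s), s⟫‖
        ≤ ‖g (a + t + τ • s) - g (a + τ • s)‖ * ‖s‖ := by
          rw [Real.norm_eq_abs]; exact abs_real_inner_le_norm _ _
      _ ≤ (L * ‖(a + t + τ • s) - (a + τ • s)‖) * ‖s‖ :=
          mul_le_mul_of_nonneg_right (hlip _ _) (norm_nonneg _)
      _ = L * ‖t‖ * ‖s‖ := by
          have : (a + t + τ • s) - (a + τ • s) = t := by abel
          rw [this]
  have key := (convex_univ (𝕜 := ℝ)).norm_image_sub_le_of_norm_hasDerivWithin_le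
    (f := φ) (f' := fun τ => ⟪g (a + t + τ • s), s⟫ - ⟪g (a + τ • s), s⟫)
    (C := L * ‖t‖ * ‖s‖)
    (fun τ _ => (hderiv τ).hasDerivWithinAt) hbound (Set.mem_univ 0) (Set.mem_univ 1)
  have hφ1 : φ 1 = f (a + s + t) - f (a + s) := by
    simp only [hφ, one_smul]
    congr 2
    abel
  have hφ0 : φ 0 = f (a + t) - f a := by simp [hφ]
  rw [hφ1, hφ0] at key
  calc |f (a + s + t) - f (a + s) - (f (a + t) - f a)|
      ≤ L * ‖t‖ * ‖s‖ * ‖(1:ℝ) - 0‖ := by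
        rw [← Real.norm_eq_abs]; exact key
    _ = L * ‖s‖ * ‖t‖ := by simp; ring

lemma col_le_iSup {a b : ℕ} (A : Matrix (Fin a) (Fin b) ℝ) (i : Fin b) :
    euclNorm (fun k => A k i) ≤ ⨆ j, euclNorm (fun k => A k j) :=
  le_ciSup (f := fun j => euclNorm fun k => A k j) (Set.Finite.bddAbove (Set.finite_range _)) i

lemma iSup_col_pos {a b : ℕ} (A : Matrix (Fin a) (Fin b) ℝ) (hA : A ≠ 0) :
    0 < ⨆ j, euclNorm (fun k => A k j) := by
  have : ∃ k i, A k i ≠ 0 := by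
    by_contra h
    push_neg at h
    exact hA (by ext k i; simpa using h k i)
  obtain ⟨k0, i0, hki⟩ := this
  have h1 : 0 < euclNorm (fun k => A k i0) := by
    rw [euclNorm]
    apply Real.sqrt_pos.mpr
    have : (0:ℝ) < A k0 i0 ^ 2 := by positivity
    calc (0:ℝ) < A k0 i0 ^ 2 := this
      _ ≤ ∑ k, A k i0 ^ 2 :=
        Finset.single_le_sum (f := fun k => A k i0 ^ 2) (fun k _ => sq_nonneg _) (Finset.mem_univ k0)
  exact h1.trans_le (col_le_iSup A i0)

lemma euclNorm_le_of_abs_le {k : ℕ} (v : Fin k → ℝ) (C : ℝ) (hC : 0 ≤ C)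
    (h : ∀ j, |v j| ≤ C) : euclNorm v ≤ Real.sqrt k * C := by
  rw [euclNorm, ← Real.sqrt_sq hC, ← Real.sqrt_mul (Nat.cast_nonneg k)]
  apply Real.sqrt_le_sqrt
  calc ∑ j, v j ^ 2 ≤ ∑ _j : Fin k, C ^ 2 := by
        apply Finset.sum_le_sum
        intro j _
        rw [← sq_abs]
        exact pow_le_pow_left₀ (abs_nonneg _) (h j) 2
    _ = (k : ℝ) * C ^ 2 := by simp [Finset.sum_const, mul_comm]

lemma norm_equiv_symm {k : ℕ} (v : Fin k → ℝ) :
    ‖(EuclideanSpace.equiv (Fin k) ℝ).symm v‖ = euclNorm v := by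
  rw [euclNorm_eq]; rfl

theorem stmt_7 {n p : ℕ} (hp : 0 < p) (q : Fin p → ℕ) (hq : ∀ i, 0 < q i)
    (f : Eu n → ℝ) (g : Eu n → Eu n) (L : ℝ) (hL : 0 ≤ L)
    (hgrad : ∀ x, HasGradientAt f (g x) x)
    (hlip : ∀ x y, ‖g x - g y‖ ≤ L * ‖x - y‖)
    (x0 : Eu n)
    (S : Matrix (Fin n) (Fin p) ℝ) (hS : S ≠ 0)
    (T : ∀ i, Matrix (Fin n) (Fin (q i)) ℝ) (hT : ∀ i, T i ≠ 0)
    -- Moore–Penrose pseudoinverses of Sᵀ and (T i)ᵀ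
    (Sp : Matrix (Fin n) (Fin p) ℝ) (hSp : IsMP Sᵀ Sp)
    (Tp : ∀ i, Matrix (Fin n) (Fin (q i)) ℝ) (hTp : ∀ i, IsMP (T i)ᵀ (Tp i))
    -- Moore–Penrose pseudoinverses of the normalized matrices S/Δ_S and T_i/Δ_{T_i}
    (Sbp : Matrix (Fin p) (Fin n) ℝ)
    (hSbp : IsMP ((⨆ i, euclNorm fun k => S k i)⁻¹ • S) Sbp)
    (Tbp : ∀ i, Matrix (Fin (q i)) (Fin n) ℝ)
    (hTbp : ∀ i, IsMP ((⨆ j, euclNorm fun k => T i k j)⁻¹ • T i) (Tbp i)) :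
    spNorm (Sp * Matrix.of (fun (i : Fin p) (k : Fin n) =>
        ((Tp i).mulVec (fun j => f (x0 + (EuclideanSpace.equiv (Fin n) ℝ).symm (fun a => S a i) + (EuclideanSpace.equiv (Fin n) ℝ).symm (fun a => T i a j))
            - f (x0 + (EuclideanSpace.equiv (Fin n) ℝ).symm (fun a => S a i)))
          - (Tp i).mulVec (fun j => f (x0 + (EuclideanSpace.equiv (Fin n) ℝ).symm (fun a => T i a j)) - f x0)) k))
      ≤ L * spNorm Sbp * Real.sqrt (∑ i, (q i : ℝ) * spNorm (Tbp i) ^ 2) := by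
  classical
  set Δ : ℝ := ⨆ i, euclNorm fun k => S k i with hΔdef
  set ΔT : ∀ i, ℝ := fun i => ⨆ j, euclNorm fun k => T i k j with hΔTdef
  have hΔpos : 0 < Δ := iSup_col_pos S hS
  have hΔTpos : ∀ i, 0 < ΔT i := fun i => iSup_col_pos (T i) (hT i)
  -- identify the pseudoinverses
  have hSpEq : Sp = Δ⁻¹ • Sbpᵀ := by
    have h1 : IsMP ((Δ⁻¹ • S)ᵀ) Sbpᵀ := hSbp.transpose
    have h2 : IsMP (Δ • (Δ⁻¹ • S)ᵀ) (Δ⁻¹ • Sbpᵀ) := h1.smul hΔpos.ne'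
    have h3 : Δ • (Δ⁻¹ • S)ᵀ = Sᵀ := by
      rw [Matrix.transpose_smul, smul_smul, mul_inv_cancel₀ hΔpos.ne', one_smul]
    rw [h3] at h2
    exact hSp.unique h2
  have hTpEq : ∀ i, Tp i = (ΔT i)⁻¹ • (Tbp i)ᵀ := by
    intro i
    have h1 : IsMP (((ΔT i)⁻¹ • T i)ᵀ) (Tbp i)ᵀ := (hTbp i).transpose
    have h2 : IsMP (ΔT i • ((ΔT i)⁻¹ • T i)ᵀ) ((ΔT i)⁻¹ • (Tbp i)ᵀ) :=
      h1.smul (hΔTpos i).ne'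
    have h3 : ΔT i • ((ΔT i)⁻¹ • T i)ᵀ = (T i)ᵀ := by
      rw [Matrix.transpose_smul, smul_smul, mul_inv_cancel₀ (hΔTpos i).ne', one_smul]
    rw [h3] at h2
    exact (hTp i).unique h2
  -- the second-difference vectors
  set w : ∀ i, Fin (q i) → ℝ := fun i j =>
    f (x0 + (EuclideanSpace.equiv (Fin n) ℝ).symm (fun a => S a i)
        + (EuclideanSpace.equiv (Fin n) ℝ).symm (fun a => T i a j))
      - f (x0 + (EuclideanSpace.equiv (Fin n) ℝ).symm (fun a => S a i))
      - (f (x0 + (EuclideanSpace.equiv (Fin n) ℝ).symm (fun a => T i a j)) - f x0)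
    with hwdef
  set M : Matrix (Fin p) (Fin n) ℝ := Matrix.of (fun (i : Fin p) (k : Fin n) =>
        ((Tp i).mulVec (fun j => f (x0 + (EuclideanSpace.equiv (Fin n) ℝ).symm (fun a => S a i) + (EuclideanSpace.equiv (Fin n) ℝ).symm (fun a => T i a j))
            - f (x0 + (EuclideanSpace.equiv (Fin n) ℝ).symm (fun a => S a i)))
          - (Tp i).mulVec (fun j => f (x0 + (EuclideanSpace.equiv (Fin n) ℝ).symm (fun a => T i a j)) - f x0)) k) with hMdef
  have hMrow : ∀ i k, M i k = (Tp i).mulVec (w i) k := by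
    intro i k
    have : w i = (fun j => f (x0 + (EuclideanSpace.equiv (Fin n) ℝ).symm (fun a => S a i) + (EuclideanSpace.equiv (Fin n) ℝ).symm (fun a => T i a j))
            - f (x0 + (EuclideanSpace.equiv (Fin n) ℝ).symm (fun a => S a i)))
          - (fun j => f (x0 + (EuclideanSpace.equiv (Fin n) ℝ).symm (fun a => T i a j)) - f x0) := by
      funext j
      simp [hwdef, Pi.sub_apply]
    rw [this, Matrix.mulVec_sub]
    simp [hMdef]
  -- entrywise bound on w
  have hwbound : ∀ i j, |w i j| ≤ L * Δ * ΔT i := by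
    intro i j
    have hb := secondDiff_bound f g L hgrad hlip x0
      ((EuclideanSpace.equiv (Fin n) ℝ).symm (fun a => S a i))
      ((EuclideanSpace.equiv (Fin n) ℝ).symm (fun a => T i a j))
    refine hb.trans ?_
    rw [norm_equiv_symm, norm_equiv_symm]
    have h1 : euclNorm (fun a => S a i) ≤ Δ := col_le_iSup S i
    have h2 : euclNorm (fun a => T i a j) ≤ ΔT i := col_le_iSup (T i) j
    have e1 : (0:ℝ) ≤ euclNorm (fun a => S a i) := euclNorm_nonneg _
    have e2 : (0:ℝ) ≤ euclNorm (fun a => T i a j) := euclNorm_nonneg _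
    calc L * euclNorm (fun a => S a i) * euclNorm (fun a => T i a j)
        ≤ L * Δ * euclNorm (fun a => T i a j) := by
          apply mul_le_mul_of_nonneg_right _ e2
          exact mul_le_mul_of_nonneg_left h1 hL
      _ ≤ L * Δ * ΔT i := by
          exact mul_le_mul_of_nonneg_left h2 (mul_nonneg hL hΔpos.le)
  -- row norms
  have hrow : ∀ i, euclNorm ((Tp i).mulVec (w i)) ≤
      (ΔT i)⁻¹ * spNorm (Tbp i) * (Real.sqrt (q i) * (L * Δ * ΔT i)) := by
    intro i
    have h1 : euclNorm ((Tp i).mulVec (w i)) ≤ spNorm (Tp i) * euclNorm (w i) :=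
      euclNorm_mulVec_le _ _
    have h2 : spNorm (Tp i) = (ΔT i)⁻¹ * spNorm (Tbp i) := by
      rw [hTpEq i, spNorm_smul, spNorm_transpose, abs_of_pos (inv_pos.mpr (hΔTpos i))]
    have h3 : euclNorm (w i) ≤ Real.sqrt (q i) * (L * Δ * ΔT i) :=
      euclNorm_le_of_abs_le _ _ (mul_nonneg (mul_nonneg hL hΔpos.le) (hΔTpos i).le) (hwbound i)
    calc euclNorm ((Tp i).mulVec (w i)) ≤ spNorm (Tp i) * euclNorm (w i) := h1
      _ = (ΔT i)⁻¹ * spNorm (Tbp i) * euclNorm (w i) := by rw [h2]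
      _ ≤ (ΔT i)⁻¹ * spNorm (Tbp i) * (Real.sqrt (q i) * (L * Δ * ΔT i)) := by
          exact mul_le_mul_of_nonneg_left h3
            (mul_nonneg (inv_nonneg.mpr (hΔTpos i).le) (spNorm_nonneg _))
  -- Frobenius bound on M
  have hfrob : frobNorm M ≤ L * Δ * Real.sqrt (∑ i, (q i : ℝ) * spNorm (Tbp i) ^ 2) := by
    have hLΔ : (0:ℝ) ≤ L * Δ := mul_nonneg hL hΔpos.le
    rw [frobNorm, ← Real.sqrt_sq hLΔ, ← Real.sqrt_mul (by positivity), Finset.mul_sum]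
    apply Real.sqrt_le_sqrt
    apply Finset.sum_le_sum
    intro i _
    have hsum : ∑ k, M i k ^ 2 = euclNorm ((Tp i).mulVec (w i)) ^ 2 := by
      rw [euclNorm, Real.sq_sqrt (by positivity)]
      exact Finset.sum_congr rfl fun k _ => by rw [hMrow i k]
    rw [hsum]
    have hb := hrow i
    have hnn : (0:ℝ) ≤ euclNorm ((Tp i).mulVec (w i)) := euclNorm_nonneg _
    calc euclNorm ((Tp i).mulVec (w i)) ^ 2
        ≤ ((ΔT i)⁻¹ * spNorm (Tbp i) * (Real.sqrt (q i) * (L * Δ * ΔT i))) ^ 2 :=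
          pow_le_pow_left₀ hnn hb 2
      _ = (L * Δ) ^ 2 * ((q i : ℝ) * spNorm (Tbp i) ^ 2) := by
          rw [mul_pow, mul_pow, mul_pow, mul_pow, mul_pow,
            Real.sq_sqrt (Nat.cast_nonneg _)]
          have hne : ΔT i ≠ 0 := (hΔTpos i).ne'
          field_simp
  -- final assembly
  calc spNorm (Sp * M) ≤ spNorm Sp * spNorm M := spNorm_mul_le _ _
    _ ≤ spNorm Sp * frobNorm M := by
        apply mul_le_mul_of_nonneg_left (spNorm_le_frobNorm M) (spNorm_nonneg _)
    _ = Δ⁻¹ * spNorm Sbp * frobNorm M := by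
        rw [hSpEq, spNorm_smul, spNorm_transpose, abs_of_pos (inv_pos.mpr hΔpos)]
    _ ≤ Δ⁻¹ * spNorm Sbp * (L * Δ * Real.sqrt (∑ i, (q i : ℝ) * spNorm (Tbp i) ^ 2)) := by
        exact mul_le_mul_of_nonneg_left hfrob
          (mul_nonneg (inv_nonneg.mpr hΔpos.le) (spNorm_nonneg _))
    _ = L * spNorm Sbp * Real.sqrt (∑ i, (q i : ℝ) * spNorm (Tbp i) ^ 2) := by
        have hΔne : Δ ≠ 0 := hΔpos.ne'
        field_simp
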